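/- Let A : Matrix (Fin a₁) (Fin a₀) 𝔽₂ and B : Matrix (Fin b₁) (Fin b₀) 𝔽₂, and let α : Fin a₁ → 𝔽₂ with α not in the range of A and β : Fin b₁ → 𝔽₂ with β not in the range of B. Then for every U : Matrix (Fin a₁) (Fin b₀) 𝔽₂ and every W : Matrix (Fin a₀) (Fin b₁) 𝔽₂, the Hamming weight of the a₁ × b₁ matrix α ⬝ βᵀ + U * Bᵀ + A * W is at least max(w_A(α), w_B(β)). Equivalently, every cochain representative of the Künneth class [α ⊗ β] in the middle cohomology of the tensor-product complex has Hamming weight at least the larger of the minimal coset weights of [α] and [β]. (The tensor-product weight bound used to prove the Ω(√n) distance estimates of Lemmas 8, 9, 10, 11 and 12.) -/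

import Mathlib

noncomputable section

open Matrix

/-- `𝔽₂`. -/
abbrev F2 : Type := ZMod 2

/-- Hamming weight of a vector over `𝔽₂`. -/
def vWeight {m : ℕ} (v : Fin m → F2) : ℕ :=
  (Finset.univ.filter fun i => v i ≠ 0).card

/-- Hamming weight (number of nonzero entries) of a matrix over `𝔽₂`. -/
def mWeight {m n : ℕ} (M : Matrix (Fin m) (Fin n) F2) : ℕ :=
  (Finset.univ.filter fun p : Fin m × Fin n => M p.1 p.2 ≠ 0).card

/-- The coset weight `w_A(α)`: the minimal Hamming weight of a representative of the
cohomology class of `α` modulo the range of `A`. -/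
def cosetWeight {m n : ℕ} (A : Matrix (Fin m) (Fin n) F2) (α : Fin m → F2) : ℕ :=
  sInf {w | ∃ x : Fin n → F2, w = vWeight (α + A.mulVec x)}

/-- Separating functional: if `α` is not in the range of `A`, there is a vector `y`
annihilating the columns of `A` with `y ⬝ᵥ α = 1`. -/
lemma exists_separating {m n : ℕ} (A : Matrix (Fin m) (Fin n) F2) (α : Fin m → F2)
    (hα : ¬ ∃ x : Fin n → F2, α = A.mulVec x) :
    ∃ y : Fin m → F2, Aᵀ.mulVec y = 0 ∧ y ⬝ᵥ α = 1 := by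
  set p := LinearMap.range (Matrix.mulVecLin A)
  have hαp : α ∉ p := by
    intro h
    obtain ⟨x, hx⟩ := h
    exact hα ⟨x, hx.symm⟩
  obtain ⟨f, hf1, hf2⟩ := p.exists_dual_map_eq_bot_of_notMem hαp inferInstance
  set y : Fin m → F2 := fun i => f (Pi.single i 1) with hy
  have hfv : ∀ v : Fin m → F2, f v = y ⬝ᵥ v := by
    intro v
    have : v = ∑ i, v i • Pi.single i (1 : F2) := by
      ext j; simp [Pi.single_apply, eq_comm]
    conv_lhs => rw [this]
    rw [map_sum]
    simp only [_root_.map_smul, smul_eq_mul, dotProduct]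
    exact Finset.sum_congr rfl fun i _ => mul_comm _ _
  have hann : ∀ v ∈ p, f v = 0 := by
    intro v hv
    have : f v ∈ p.map f := ⟨v, hv, rfl⟩
    rwa [hf2, Submodule.mem_bot] at this
  refine ⟨y, ?_, ?_⟩
  · ext j
    have hcol : A.mulVec (Pi.single j 1) ∈ p := ⟨Pi.single j 1, rfl⟩
    have := hann _ hcol
    rw [hfv] at this
    simpa [Matrix.mulVec, Matrix.transpose_apply, dotProduct, Pi.single_apply,
      mul_comm] using this
  · have h1 : y ⬝ᵥ α ≠ 0 := by rw [← hfv]; exact hf1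
    revert h1
    generalize y ⬝ᵥ α = c
    revert c; decide

lemma vWeight_mulVec_le {m n : ℕ} (M : Matrix (Fin m) (Fin n) F2) (y : Fin n → F2) :
    vWeight (M.mulVec y) ≤ mWeight M := by
  classical
  rcases Nat.eq_zero_or_pos n with hn | hn
  · subst hn
    have : M.mulVec y = 0 := by
      ext i; simp [Matrix.mulVec, dotProduct]
    simp [vWeight, this]
  haveI : Inhabited (Fin n) := ⟨⟨0, hn⟩⟩
  unfold vWeight mWeight
  have hex : ∀ i : Fin m, M.mulVec y i ≠ 0 → ∃ j : Fin n, M i j ≠ 0 := by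
    intro i hi
    by_contra h
    push_neg at h
    exact hi (by simp [Matrix.mulVec, dotProduct, fun j => h j])
  choose g hg using hex
  apply Finset.card_le_card_of_injOn
    (fun i => (i, if h : M.mulVec y i ≠ 0 then g i h else default))
  · intro i hi
    simp only [Finset.coe_filter, Finset.mem_coe, Finset.mem_filter, Set.mem_setOf_eq] at hi ⊢
    rw [dif_pos hi.2]
    exact ⟨Finset.mem_univ _, hg i hi.2⟩
  · intro i _ j _ h
    exact congrArg Prod.fst h

lemma cosetWeight_le {m n : ℕ} (A : Matrix (Fin m) (Fin n) F2) (α : Fin m → F2)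
    (x : Fin n → F2) : cosetWeight A α ≤ vWeight (α + A.mulVec x) :=
  Nat.sInf_le ⟨x, rfl⟩

/-- **Tensor-product weight bound (used for the `Ω(√n)` distance estimates of
Lemmas 8–12).**  If `α` is not in the range of `A` and `β` is not in the range of `B`,
then every cochain representative `α ⬝ βᵀ + U * Bᵀ + A * W` of the Künneth class
`[α ⊗ β]` in the middle cohomology of the tensor-product complex has Hamming weight at
least `max(w_A(α), w_B(β))`. -/
theorem tensor_product_weight_bound
    {a₁ a₀ b₁ b₀ : ℕ}
    (A : Matrix (Fin a₁) (Fin a₀) F2) (B : Matrix (Fin b₁) (Fin b₀) F2)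
    (α : Fin a₁ → F2) (hα : ¬ ∃ x : Fin a₀ → F2, α = A.mulVec x)
    (β : Fin b₁ → F2) (hβ : ¬ ∃ x : Fin b₀ → F2, β = B.mulVec x)
    (U : Matrix (Fin a₁) (Fin b₀) F2) (W : Matrix (Fin a₀) (Fin b₁) F2) :
    max (cosetWeight A α) (cosetWeight B β)
      ≤ mWeight (Matrix.vecMulVec α β + U * Bᵀ + A * W) := by
  classical
  set M := Matrix.vecMulVec α β + U * Bᵀ + A * W with hM
  obtain ⟨y, hy0, hy1⟩ := exists_separating B β hβ
  obtain ⟨x, hx0, hx1⟩ := exists_separating A α hα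
  apply max_le
  · -- right multiply by y : M.mulVec y = α + A.mulVec (W.mulVec y)
    have hMy : M.mulVec y = α + A.mulVec (W.mulVec y) := by
      rw [hM, Matrix.add_mulVec, Matrix.add_mulVec]
      have h1 : (Matrix.vecMulVec α β).mulVec y = α := by
        ext i
        have hb : β ⬝ᵥ y = 1 := by rwa [dotProduct_comm]
        calc (Matrix.vecMulVec α β).mulVec y i = α i * (β ⬝ᵥ y) := by
              simp [Matrix.mulVec, Matrix.vecMulVec_apply, dotProduct,
                Finset.mul_sum, mul_assoc]
          _ = α i := by rw [hb, mul_one]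
      have h2 : (U * Bᵀ).mulVec y = 0 := by
        rw [← Matrix.mulVec_mulVec, hy0, Matrix.mulVec_zero]
      rw [h1, h2, ← Matrix.mulVec_mulVec]
      simp
    calc cosetWeight A α ≤ vWeight (α + A.mulVec (W.mulVec y)) :=
          cosetWeight_le A α _
      _ = vWeight (M.mulVec y) := by rw [hMy]
      _ ≤ mWeight M := vWeight_mulVec_le M y
  · -- left multiply by x : Mᵀ.mulVec x = β + B.mulVec (Uᵀ.mulVec x)
    have hMx : Mᵀ.mulVec x = β + B.mulVec (Uᵀ.mulVec x) := by
      rw [hM]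
      ext j
      simp only [Matrix.transpose_add, Matrix.add_mulVec, Pi.add_apply]
      have h1 : (Matrix.vecMulVec α β)ᵀ.mulVec x = β := by
        ext k
        calc (Matrix.vecMulVec α β)ᵀ.mulVec x k = β k * (x ⬝ᵥ α) := by
              simp [Matrix.mulVec, Matrix.vecMulVec_apply, dotProduct,
                Matrix.transpose_apply, Finset.mul_sum]
              apply Finset.sum_congr rfl
              intro i _; ring
          _ = β k := by rw [hx1, mul_one]
      have h2 : (A * W)ᵀ.mulVec x = 0 := by
        rw [Matrix.transpose_mul, ← Matrix.mulVec_mulVec, hx0, Matrix.mulVec_zero]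
      have h3 : (U * Bᵀ)ᵀ.mulVec x = B.mulVec (Uᵀ.mulVec x) := by
        rw [Matrix.transpose_mul, Matrix.transpose_transpose, ← Matrix.mulVec_mulVec]
      rw [h1, h2, h3]
      simp
    have hw : mWeight Mᵀ = mWeight M := by
      unfold mWeight
      apply Finset.card_nbij (fun p => (p.2, p.1))
      · intro p hp; simp only [Finset.coe_filter, Finset.mem_coe, Finset.mem_filter, Finset.mem_univ, true_and, Set.mem_setOf_eq, Matrix.transpose_apply] at hp ⊢; exact (Finset.mem_filter.mp hp).2
      · intro p hp q hq h
        simp only [Prod.mk.injEq] at h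
        exact Prod.ext h.2 h.1
      · intro p hp
        exact ⟨(p.2, p.1), by simp only [Finset.coe_filter, Finset.mem_coe, Finset.mem_filter, Finset.mem_univ, true_and, Set.mem_setOf_eq, Matrix.transpose_apply] at hp ⊢; exact Finset.mem_filter.mpr ⟨Finset.mem_univ _, hp⟩, rfl⟩
    calc cosetWeight B β ≤ vWeight (β + B.mulVec (Uᵀ.mulVec x)) :=
          cosetWeight_le B β _
      _ = vWeight (Mᵀ.mulVec x) := by rw [hMx]
      _ ≤ mWeight Mᵀ := vWeight_mulVec_le Mᵀ x
      _ = mWeight M := hw
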